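/- Let X be a topological space with a ℤ^d-action, let U ⊆ X be clopen, L ∈ ℕ, and let C ⊆ X → 2^{ℤ^d} be continuous and equivariant. Then the map x ↦ C'(x) := C(x) ∪ {n ∈ ℤ^d : x·n ∈ U and (n + □_L) ∩ (C(x) + □_L) = ∅} is continuous and equivariant. -/

import Mathlib

lemma nrm_eqE (d : ℕ) (v : Fin d → ℤ) :
    Real.sqrt (∑ i, ((v i : ℝ)) ^ 2) =
      ‖(WithLp.equiv 2 (Fin d → ℝ)).symm (fun i => (v i : ℝ))‖ := by
  rw [EuclideanSpace.norm_eq]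
  congr 1
  refine Finset.sum_congr rfl fun i _ => ?_
  rw [WithLp.equiv_symm_apply, WithLp.ofLp_toLp, Real.norm_eq_abs, sq_abs]

lemma nrm_coord (d : ℕ) (v : Fin d → ℤ) (i : Fin d) :
    |(v i : ℝ)| ≤ Real.sqrt (∑ j, ((v j : ℝ)) ^ 2) := by
  rw [← Real.sqrt_sq_eq_abs]
  exact Real.sqrt_le_sqrt (Finset.single_le_sum (f := fun j => ((v j : ℝ)) ^ 2)
    (fun j _ => sq_nonneg _) (Finset.mem_univ i))

lemma nrm_bound (d L : ℕ) (R : ℝ) (n a : Fin d → ℤ)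
    (hn : Real.sqrt (∑ i, ((n i : ℝ)) ^ 2) ≤ R)
    (h : ∀ i, |a i - n i| ≤ 2 * (L : ℤ)) :
    Real.sqrt (∑ i, ((a i : ℝ)) ^ 2) ≤ R + 2 * L * d := by
  have tri : Real.sqrt (∑ i, ((a i : ℝ)) ^ 2) ≤
      Real.sqrt (∑ i, ((n i : ℝ)) ^ 2) + Real.sqrt (∑ i, (((a - n) i : ℝ)) ^ 2) := by
    rw [nrm_eqE, nrm_eqE, nrm_eqE]
    have : (WithLp.equiv 2 (Fin d → ℝ)).symm (fun i => ((a : Fin d → ℤ) i : ℝ)) =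
        (WithLp.equiv 2 (Fin d → ℝ)).symm (fun i => ((n : Fin d → ℤ) i : ℝ)) +
        (WithLp.equiv 2 (Fin d → ℝ)).symm (fun i => (((a - n) : Fin d → ℤ) i : ℝ)) := by
      ext i
      simp [Pi.sub_apply]
    rw [this]
    exact norm_add_le _ _
  have hsub : Real.sqrt (∑ i, (((a - n) i : ℝ)) ^ 2) ≤ 2 * L * d := by
    have h1 : (∑ i, (((a - n) i : ℝ)) ^ 2) ≤ ∑ _i : Fin d, ((2 * L : ℝ)) ^ 2 := by
      refine Finset.sum_le_sum fun i _ => ?_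
      have hi : |(((a - n) i : ℤ) : ℝ)| ≤ 2 * L := by
        have := h i
        rw [Pi.sub_apply]
        exact_mod_cast this
      have := abs_le.mp hi
      nlinarith [this.1, this.2]
    have h2 : (∑ _i : Fin d, ((2 * L : ℝ)) ^ 2) = d * (2 * L) ^ 2 := by
      simp [Finset.sum_const, Finset.card_univ]
    calc Real.sqrt (∑ i, (((a - n) i : ℝ)) ^ 2) ≤ Real.sqrt ((d : ℝ) * (2 * L) ^ 2) := by
          apply Real.sqrt_le_sqrt; rw [← h2]; exact h1
      _ ≤ Real.sqrt ((2 * L * d) ^ 2) := by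
          apply Real.sqrt_le_sqrt
          have hd : (d : ℝ) ≤ (d : ℝ) ^ 2 := by
            have : d ≤ d ^ 2 := Nat.le_self_pow two_ne_zero d
            exact_mod_cast this
          nlinarith [sq_nonneg (2 * (L : ℝ))]
      _ = 2 * L * d := Real.sqrt_sq (by positivity)
  linarith




/-- for a clopen `U` and a continuous equivariant set-valued map
`x ↦ C x ⊆ ℤ^d`, the map
`x ↦ C x ∪ {n : x·n ∈ U ∧ (n + □_L) ∩ (C x + □_L) = ∅}` is continuous and equivariant. -/
theorem stmt_19 (d L : ℕ) (X : Type*) [TopologicalSpace X]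
    (act : X → (Fin d → ℤ) → X)
    (hact0 : ∀ x, act x 0 = x)
    (hactadd : ∀ x m n, act (act x m) n = act x (m + n))
    (hactc : ∀ n, Continuous fun x => act x n)
    (U : Set X) (hU : IsClopen U)
    (C : X → Set (Fin d → ℤ))
    (hCcont : ∀ x : X, ∀ R : ℝ, 0 < R → ∃ W : Set X, IsOpen W ∧ x ∈ W ∧ ∀ y ∈ W,
      C y ∩ {n | Real.sqrt (∑ i, ((n i : ℝ)) ^ 2) ≤ R} =
      C x ∩ {n | Real.sqrt (∑ i, ((n i : ℝ)) ^ 2) ≤ R})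
    (hCequiv : ∀ x m, C (act x m) = {a | a + m ∈ C x}) :
    -- with C' x := C x ∪ {n | x·n ∈ U ∧ (n + □_L) ∩ (C x + □_L) = ∅}:
    (∀ x : X, ∀ R : ℝ, 0 < R → ∃ W : Set X, IsOpen W ∧ x ∈ W ∧ ∀ y ∈ W,
      (C y ∪ {n | act y n ∈ U ∧ ∀ s : Fin d → ℤ, (∀ i, |s i - n i| ≤ (L : ℤ)) →
          ¬ ∃ a ∈ C y, ∀ i, |s i - a i| ≤ (L : ℤ)}) ∩
        {n | Real.sqrt (∑ i, ((n i : ℝ)) ^ 2) ≤ R} =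
      (C x ∪ {n | act x n ∈ U ∧ ∀ s : Fin d → ℤ, (∀ i, |s i - n i| ≤ (L : ℤ)) →
          ¬ ∃ a ∈ C x, ∀ i, |s i - a i| ≤ (L : ℤ)}) ∩
        {n | Real.sqrt (∑ i, ((n i : ℝ)) ^ 2) ≤ R}) ∧
    (∀ x m,
      (C (act x m) ∪ {n | act (act x m) n ∈ U ∧ ∀ s : Fin d → ℤ,
          (∀ i, |s i - n i| ≤ (L : ℤ)) → ¬ ∃ a ∈ C (act x m), ∀ i, |s i - a i| ≤ (L : ℤ)}) =
      {b | b + m ∈ C x ∪ {n | act x n ∈ U ∧ ∀ s : Fin d → ℤ,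
          (∀ i, |s i - n i| ≤ (L : ℤ)) → ¬ ∃ a ∈ C x, ∀ i, |s i - a i| ≤ (L : ℤ)}}) := by
  classical
  constructor
  · -- continuity
    intro x R hR
    set R' : ℝ := R + 2 * L * d + 1 with hR'
    obtain ⟨W', hW'open, hxW', hW'⟩ := hCcont x R' (by positivity)
    set F : Finset (Fin d → ℤ) := Finset.Icc (fun _ => -⌈R⌉) (fun _ => ⌈R⌉) with hF
    refine ⟨W' ∩ ⋂ n ∈ F, (fun y => act y n) ⁻¹' (if act x n ∈ U then U else Uᶜ),
      ?_, ?_, ?_⟩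
    · refine hW'open.inter (isOpen_biInter_finset fun n _ => ?_)
      refine (hactc n).isOpen_preimage _ ?_
      split_ifs
      · exact hU.2
      · exact hU.1.isOpen_compl
    · refine ⟨hxW', Set.mem_iInter₂.mpr fun n _ => ?_⟩
      by_cases hx : act x n ∈ U <;> simp [hx]
    · intro y hy
      obtain ⟨hyW', hyU⟩ := hy
      have hUiff : ∀ n : Fin d → ℤ, n ∈ F → (act y n ∈ U ↔ act x n ∈ U) := by
        intro n hn
        have h := Set.mem_iInter₂.mp hyU n hn
        by_cases hx : act x n ∈ U <;> simp [hx] at h <;> simp [hx, h]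
      have hCiff : ∀ a : Fin d → ℤ, Real.sqrt (∑ i, ((a i : ℝ)) ^ 2) ≤ R' →
          (a ∈ C y ↔ a ∈ C x) := by
        intro a ha
        have h := Set.ext_iff.mp (hW' y hyW') a
        simp only [Set.mem_inter_iff, Set.mem_setOf_eq] at h
        constructor
        · intro hc; exact (h.mp ⟨hc, ha⟩).1
        · intro hc; exact (h.mpr ⟨hc, ha⟩).1
      ext n
      simp only [Set.mem_inter_iff, Set.mem_union, Set.mem_setOf_eq]
      refine and_congr_left fun hnR => ?_
      have hRR' : R ≤ R' := by
        rw [hR']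
        have : (0:ℝ) ≤ 2 * L * d := by positivity
        linarith
      have hnF : n ∈ F := by
        rw [hF, Finset.mem_Icc]
        constructor <;> intro i
        · have h1 := (abs_le.mp (nrm_coord d n i)).1
          have h2 : -(⌈R⌉ : ℝ) ≤ (n i : ℝ) := by
            have := Int.le_ceil R
            linarith
          exact_mod_cast h2
        · have h1 := (abs_le.mp (nrm_coord d n i)).2
          have h2 : (n i : ℝ) ≤ (⌈R⌉ : ℝ) := by
            have := Int.le_ceil R
            linarith
          exact_mod_cast h2
      have key : ∀ s : Fin d → ℤ, (∀ i, |s i - n i| ≤ (L : ℤ)) →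
          ∀ a : Fin d → ℤ, (∀ i, |s i - a i| ≤ (L : ℤ)) → (a ∈ C y ↔ a ∈ C x) := by
        intro s hs a haB
        refine hCiff a ?_
        have h2L : ∀ i, |a i - n i| ≤ 2 * (L : ℤ) := by
          intro i
          have h1 := abs_le.mp (hs i)
          have h2 := abs_le.mp (haB i)
          rw [abs_le]
          omega
        have := nrm_bound d L R n a hnR h2L
        linarith
      refine or_congr (hCiff n (le_trans hnR hRR')) (and_congr (hUiff n hnF) ?_)
      constructor <;> intro h s hs hex
      · obtain ⟨a, haC, haB⟩ := hex
        exact h s hs ⟨a, (key s hs a haB).mpr haC, haB⟩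
      · obtain ⟨a, haC, haB⟩ := hex
        exact h s hs ⟨a, (key s hs a haB).mp haC, haB⟩
  · -- equivariance
    intro x m
    ext b
    simp only [Set.mem_union, Set.mem_setOf_eq, hCequiv x m, hactadd]
    have hadd : m + b = b + m := add_comm m b
    rw [hadd]
    refine or_congr Iff.rfl (and_congr Iff.rfl ?_)
    constructor
    · intro h s hs hex
      obtain ⟨a, haC, haB⟩ := hex
      refine h (s - m) (fun i => ?_) ⟨a - m, ?_, fun i => ?_⟩
      · have := hs i
        simp only [Pi.sub_apply, Pi.add_apply] at this ⊢
        rw [abs_le] at this ⊢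
        omega
      · show (a - m) + m ∈ C x
        simpa using haC
      · have := haB i
        simp only [Pi.sub_apply] at this ⊢
        rw [abs_le] at this ⊢
        omega
    · intro h s hs hex
      obtain ⟨a, haC, haB⟩ := hex
      refine h (s + m) (fun i => ?_) ⟨a + m, ?_, fun i => ?_⟩
      · have := hs i
        simp only [Pi.sub_apply, Pi.add_apply] at this ⊢
        rw [abs_le] at this ⊢
        omega
      · exact haC
      · have := haB i
        simp only [Pi.sub_apply, Pi.add_apply] at this ⊢
        rw [abs_le] at this ⊢
        omega
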